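/- Let μ₁, μ₂ be continuous, everywhere-positive, strictly log-concave probability densities on ℝ. Then the function of θ₁ given by Pr(u₁ > u₂) = ∫_ℝ ∫_{x₂}^∞ μ₁(x₁ - θ₁) μ₂(x₂) dx₁ dx₂ is strictly log-concave in θ₁. -/

import Mathlib

open MeasureTheory Set

/-- Strict log-concavity of a positive function on ℝ. -/
def StrictLogConcave (f : ℝ → ℝ) : Prop :=
  ∀ x y l : ℝ, x ≠ y → 0 < l → l < 1 →
    f (l * x + (1 - l) * y) > f x ^ l * f y ^ (1 - l)

/-- Four-point inequality from strict log-concavity. -/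
lemma slc_four_pt {f : ℝ → ℝ} (hpos : ∀ x, 0 < f x) (h : StrictLogConcave f)
    {a b c d : ℝ} (hsum : a + b = c + d) (hac : a < c) (had : a < d) :
    f a * f b < f c * f d := by
  have hab : a < b := by linarith
  have hba : (0:ℝ) < b - a := by linarith
  set l : ℝ := (b - c) / (b - a) with hl
  have hlmul : l * (b - a) = b - c := div_mul_cancel₀ _ (ne_of_gt hba)
  have hl0 : 0 < l := div_pos (by linarith) hba
  have hl1 : l < 1 := by rw [hl, div_lt_one hba]; linarith
  have h1 := h a b l (ne_of_lt hab) hl0 hl1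
  have h2 := h a b (1 - l) (ne_of_lt hab) (by linarith) (by linarith)
  have e1 : l * a + (1 - l) * b = c := by nlinarith [hlmul]
  have e2 : (1 - l) * a + (1 - (1 - l)) * b = d := by nlinarith [hlmul]
  rw [e1] at h1
  rw [e2] at h2
  have hp1 : (0:ℝ) < f a ^ l * f b ^ (1 - l) :=
    mul_pos (Real.rpow_pos_of_pos (hpos a) _) (Real.rpow_pos_of_pos (hpos b) _)
  have := mul_lt_mul'' h1 h2 hp1.le
    (mul_pos (Real.rpow_pos_of_pos (hpos a) _) (Real.rpow_pos_of_pos (hpos b) _)).le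
  calc f a * f b
      = (f a ^ l * f b ^ (1 - l)) * (f a ^ (1 - l) * f b ^ (1 - (1 - l))) := by
        rw [show f a ^ l * f b ^ (1 - l) * (f a ^ (1 - l) * f b ^ (1 - (1 - l)))
            = (f a ^ l * f a ^ (1 - l)) * (f b ^ (1 - l) * f b ^ (1 - (1 - l))) by ring,
          ← Real.rpow_add (hpos a), ← Real.rpow_add (hpos b)]
        norm_num
    _ < f c * f d := this

/-- Andréief-type positivity for 2×2 "integral determinants". -/
lemma det_pos {φ₁ φ₂ ψ₁ ψ₂ : ℝ → ℝ}
    (h11 : Integrable (fun s => φ₁ s * ψ₁ s))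
    (h12 : Integrable (fun s => φ₁ s * ψ₂ s))
    (h21 : Integrable (fun s => φ₂ s * ψ₁ s))
    (h22 : Integrable (fun s => φ₂ s * ψ₂ s))
    (hAB : ∀ s t : ℝ,
      0 ≤ (φ₁ s * φ₂ t - φ₁ t * φ₂ s) * (ψ₁ s * ψ₂ t - ψ₁ t * ψ₂ s))
    {U V : Set ℝ} (hUo : IsOpen U) (hVo : IsOpen V)
    (hUne : U.Nonempty) (hVne : V.Nonempty)
    (hUV : ∀ s ∈ U, ∀ t ∈ V,
      0 < (φ₁ s * φ₂ t - φ₁ t * φ₂ s) * (ψ₁ s * ψ₂ t - ψ₁ t * ψ₂ s)) :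
    (∫ s, φ₁ s * ψ₂ s) * (∫ s, φ₂ s * ψ₁ s) < (∫ s, φ₁ s * ψ₁ s) * (∫ s, φ₂ s * ψ₂ s) := by
  have i1 : Integrable (fun z : ℝ × ℝ => (φ₁ z.1 * ψ₁ z.1) * (φ₂ z.2 * ψ₂ z.2)) ((volume : Measure ℝ).prod volume) :=
    h11.mul_prod h22
  have i2 : Integrable (fun z : ℝ × ℝ => (φ₂ z.1 * ψ₂ z.1) * (φ₁ z.2 * ψ₁ z.2)) ((volume : Measure ℝ).prod volume) :=
    h22.mul_prod h11
  have i3 : Integrable (fun z : ℝ × ℝ => (φ₁ z.1 * ψ₂ z.1) * (φ₂ z.2 * ψ₁ z.2)) ((volume : Measure ℝ).prod volume) :=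
    h12.mul_prod h21
  have i4 : Integrable (fun z : ℝ × ℝ => (φ₂ z.1 * ψ₁ z.1) * (φ₁ z.2 * ψ₂ z.2)) ((volume : Measure ℝ).prod volume) :=
    h21.mul_prod h12
  have hFeq : (fun z : ℝ × ℝ =>
      (φ₁ z.1 * φ₂ z.2 - φ₁ z.2 * φ₂ z.1) * (ψ₁ z.1 * ψ₂ z.2 - ψ₁ z.2 * ψ₂ z.1))
      = fun z : ℝ × ℝ => ((φ₁ z.1 * ψ₁ z.1) * (φ₂ z.2 * ψ₂ z.2)
      + (φ₂ z.1 * ψ₂ z.1) * (φ₁ z.2 * ψ₁ z.2))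
      - ((φ₁ z.1 * ψ₂ z.1) * (φ₂ z.2 * ψ₁ z.2)
      + (φ₂ z.1 * ψ₁ z.1) * (φ₁ z.2 * ψ₂ z.2)) := by
    funext z; ring
  have hFint : Integrable (fun z : ℝ × ℝ =>
      (φ₁ z.1 * φ₂ z.2 - φ₁ z.2 * φ₂ z.1) * (ψ₁ z.1 * ψ₂ z.2 - ψ₁ z.2 * ψ₂ z.1)) ((volume : Measure ℝ).prod volume) := by
    rw [hFeq]; exact ((i1.add i2).sub (i3.add i4))
  have hInt : (∫ z : ℝ × ℝ,
      (φ₁ z.1 * φ₂ z.2 - φ₁ z.2 * φ₂ z.1) * (ψ₁ z.1 * ψ₂ z.2 - ψ₁ z.2 * ψ₂ z.1) ∂((volume : Measure ℝ).prod volume)) =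
      2 * ((∫ s, φ₁ s * ψ₁ s) * (∫ s, φ₂ s * ψ₂ s)
        - (∫ s, φ₁ s * ψ₂ s) * (∫ s, φ₂ s * ψ₁ s)) := by
    have e : (∫ z : ℝ × ℝ,
        (φ₁ z.1 * φ₂ z.2 - φ₁ z.2 * φ₂ z.1) * (ψ₁ z.1 * ψ₂ z.2 - ψ₁ z.2 * ψ₂ z.1) ∂((volume : Measure ℝ).prod volume))
        = ∫ z : ℝ × ℝ, (((φ₁ z.1 * ψ₁ z.1) * (φ₂ z.2 * ψ₂ z.2)
        + (φ₂ z.1 * ψ₂ z.1) * (φ₁ z.2 * ψ₁ z.2))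
        - ((φ₁ z.1 * ψ₂ z.1) * (φ₂ z.2 * ψ₁ z.2)
        + (φ₂ z.1 * ψ₁ z.1) * (φ₁ z.2 * ψ₂ z.2))) ∂((volume : Measure ℝ).prod volume) := by
      exact congrArg (integral ((volume : Measure ℝ).prod volume)) hFeq
    have i12 : Integrable (fun z : ℝ × ℝ => (φ₁ z.1 * ψ₁ z.1) * (φ₂ z.2 * ψ₂ z.2)
        + (φ₂ z.1 * ψ₂ z.1) * (φ₁ z.2 * ψ₁ z.2)) ((volume : Measure ℝ).prod volume) := i1.add i2
    have i34 : Integrable (fun z : ℝ × ℝ => (φ₁ z.1 * ψ₂ z.1) * (φ₂ z.2 * ψ₁ z.2)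
        + (φ₂ z.1 * ψ₁ z.1) * (φ₁ z.2 * ψ₂ z.2)) ((volume : Measure ℝ).prod volume) := i3.add i4
    have p1 : (∫ a : ℝ × ℝ, φ₁ a.1 * ψ₁ a.1 * (φ₂ a.2 * ψ₂ a.2)
        ∂((volume : Measure ℝ).prod volume))
        = (∫ s, φ₁ s * ψ₁ s) * ∫ s, φ₂ s * ψ₂ s :=
      integral_prod_mul (fun s => φ₁ s * ψ₁ s) (fun s => φ₂ s * ψ₂ s)
    have p2 : (∫ a : ℝ × ℝ, φ₂ a.1 * ψ₂ a.1 * (φ₁ a.2 * ψ₁ a.2)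
        ∂((volume : Measure ℝ).prod volume))
        = (∫ s, φ₂ s * ψ₂ s) * ∫ s, φ₁ s * ψ₁ s :=
      integral_prod_mul (fun s => φ₂ s * ψ₂ s) (fun s => φ₁ s * ψ₁ s)
    have p3 : (∫ a : ℝ × ℝ, φ₁ a.1 * ψ₂ a.1 * (φ₂ a.2 * ψ₁ a.2)
        ∂((volume : Measure ℝ).prod volume))
        = (∫ s, φ₁ s * ψ₂ s) * ∫ s, φ₂ s * ψ₁ s :=
      integral_prod_mul (fun s => φ₁ s * ψ₂ s) (fun s => φ₂ s * ψ₁ s)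
    have p4 : (∫ a : ℝ × ℝ, φ₂ a.1 * ψ₁ a.1 * (φ₁ a.2 * ψ₂ a.2)
        ∂((volume : Measure ℝ).prod volume))
        = (∫ s, φ₂ s * ψ₁ s) * ∫ s, φ₁ s * ψ₂ s :=
      integral_prod_mul (fun s => φ₂ s * ψ₁ s) (fun s => φ₁ s * ψ₂ s)
    rw [e, integral_sub i12 i34, integral_add i1 i2, integral_add i3 i4, p1, p2, p3, p4]
    ring
  have hpos : 0 < ∫ z : ℝ × ℝ,
      (φ₁ z.1 * φ₂ z.2 - φ₁ z.2 * φ₂ z.1) * (ψ₁ z.1 * ψ₂ z.2 - ψ₁ z.2 * ψ₂ z.1) ∂((volume : Measure ℝ).prod volume) := by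
    refine (integral_pos_iff_support_of_nonneg (fun (z : ℝ × ℝ) => hAB z.1 z.2) hFint).mpr ?_
    have hsub : U ×ˢ V ⊆ Function.support (fun z : ℝ × ℝ =>
        (φ₁ z.1 * φ₂ z.2 - φ₁ z.2 * φ₂ z.1) * (ψ₁ z.1 * ψ₂ z.2 - ψ₁ z.2 * ψ₂ z.1)) := by
      rintro ⟨s, t⟩ ⟨hs, ht⟩
      exact ne_of_gt (hUV s hs t ht)
    refine lt_of_lt_of_le ?_ (measure_mono hsub)
    rw [Measure.prod_prod]
    exact ENNReal.mul_pos (hUo.measure_pos volume hUne).ne' (hVo.measure_pos volume hVne).ne'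
  rw [hInt] at hpos
  linarith

lemma integrable_of_integral_one {f : ℝ → ℝ} (h : ∫ x, f x = 1) : Integrable f := by
  by_contra hi
  rw [integral_undef hi] at h
  norm_num at h

/-- translation of a tail integral -/
lemma survival_shift (μ : ℝ → ℝ) (x θ : ℝ) :
    ∫ s in Ioi x, μ (s - θ) = ∫ s in Ioi (x - θ), μ s := by
  have h1 : ∀ s : ℝ, (Ioi (x - θ)).indicator μ (s - θ)
      = (Ioi x).indicator (fun s => μ (s - θ)) s := by
    intro s
    by_cases hs : x < s
    · rw [indicator_of_mem (by simpa using hs), indicator_of_mem (by simp [hs])]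
    · rw [indicator_of_notMem (by simpa using hs), indicator_of_notMem (by simp [hs])]
  rw [← integral_indicator measurableSet_Ioi, ← integral_indicator measurableSet_Ioi]
  rw [show (fun s => (Ioi x).indicator (fun s => μ (s - θ)) s)
      = fun s => (Ioi (x - θ)).indicator μ (s - θ) by funext s; rw [h1 s]]
  exact integral_sub_right_eq_self ((Ioi (x - θ)).indicator μ) θ

/-- Strict four-point inequality + continuity + positivity imply strict log-concavity. -/
lemma strictLogConcave_of_four_pt {f : ℝ → ℝ} (hc : Continuous f) (hpos : ∀ x, 0 < f x)
    (h4 : ∀ a b c d : ℝ, a + b = c + d → a < c → a < d → f a * f b < f c * f d) :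
    StrictLogConcave f := by
  set φ : ℝ → ℝ := fun t => Real.log (f t) with hφ
  have hφc : Continuous φ := hc.log (fun x => (hpos x).ne')
  have h4log : ∀ a b c d : ℝ, a + b = c + d → a < c → a < d → φ a + φ b < φ c + φ d := by
    intro a b c d hs hac had
    have := Real.log_lt_log (mul_pos (hpos a) (hpos b)) (h4 a b c d hs hac had)
    rwa [Real.log_mul (hpos a).ne' (hpos b).ne',
      Real.log_mul (hpos c).ne' (hpos d).ne'] at this
  -- main helper for x < y
  have key : ∀ x y l : ℝ, x < y → 0 < l → l < 1 →
      f (l * x + (1 - l) * y) > f x ^ l * f y ^ (1 - l) := by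
    intro x y l hxy hl0 hl1
    set z := l * x + (1 - l) * y with hz
    have hxz : x < z := by nlinarith
    have hzy : z < y := by nlinarith
    have hyx : (0:ℝ) < y - x := by linarith
    -- chord
    set L : ℝ → ℝ := fun t => φ x + (t - x) * (φ y - φ x) / (y - x) with hL
    set g : ℝ → ℝ := fun t => φ t - L t with hg
    have hgc : Continuous g := by
      apply hφc.sub
      apply continuous_const.add
      exact (((continuous_id.sub continuous_const).mul continuous_const).div_const _)
    have hgx : g x = 0 := by simp [hg, hL]
    have hgy : g y = 0 := by
      simp only [hg, hL]
      field_simp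
      ring
    -- no interior minimizer
    have h_no_int_min : ∀ t₀ ∈ Ioo x y, ¬ IsMinOn g (Icc x y) t₀ := by
      rintro t₀ ⟨ht₀x, ht₀y⟩ hmin
      set ε : ℝ := min (t₀ - x) (y - t₀) / 2 with hε
      have hε0 : 0 < ε := by
        apply div_pos _ (by norm_num)
        exact lt_min (by linarith) (by linarith)
      have hεx : x < t₀ - ε := by
        have : ε ≤ (t₀ - x) / 2 := by
          apply div_le_div_of_nonneg_right (min_le_left _ _) (by norm_num)
        linarith
      have hεy : t₀ + ε < y := by
        have : ε ≤ (y - t₀) / 2 := by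
          apply div_le_div_of_nonneg_right (min_le_right _ _) (by norm_num)
        linarith
      have h4' : φ (t₀ - ε) + φ (t₀ + ε) < φ t₀ + φ t₀ :=
        h4log (t₀ - ε) (t₀ + ε) t₀ t₀ (by ring) (by linarith) (by linarith)
      have hLaff : L (t₀ - ε) + L (t₀ + ε) = L t₀ + L t₀ := by
        simp only [hL]; ring
      have hu := hmin (show t₀ - ε ∈ Icc x y from ⟨by linarith, by linarith⟩)
      have hv := hmin (show t₀ + ε ∈ Icc x y from ⟨by linarith, by linarith⟩)
      simp only [hg, Set.mem_setOf_eq] at hu hv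
      linarith [hu, hv, h4', hLaff]
    -- minimum over Icc
    obtain ⟨t₀, ht₀mem, ht₀min⟩ := isCompact_Icc.exists_isMinOn
      (nonempty_Icc.mpr hxy.le) hgc.continuousOn
    have hgt₀ : g t₀ = 0 := by
      have hle : g t₀ ≤ 0 := by
        have := ht₀min (show x ∈ Icc x y from ⟨le_refl x, hxy.le⟩)
        simpa [hgx] using this
      rcases eq_or_lt_of_le hle with h | h
      · exact h
      · exfalso
        have ht₀I : t₀ ∈ Ioo x y := by
          rcases eq_or_lt_of_le ht₀mem.1 with h1 | h1
          · exfalso; rw [← h1] at h; rw [hgx] at h; exact lt_irrefl _ h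
          rcases eq_or_lt_of_le ht₀mem.2 with h2 | h2
          · exfalso; rw [h2] at h; rw [hgy] at h; exact lt_irrefl _ h
          exact ⟨h1, h2⟩
        exact h_no_int_min t₀ ht₀I ht₀min
    have hgz : 0 < g z := by
      rcases lt_or_ge 0 (g z) with h | h
      · exact h
      · exfalso
        apply h_no_int_min z ⟨hxz, hzy⟩
        intro t ht
        have := ht₀min ht
        rw [hgt₀] at this
        calc g z ≤ 0 := h
          _ ≤ g t := this
    -- conclude
    have hLz : L z = l * φ x + (1 - l) * φ y := by
      simp only [hL, hz]
      field_simp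
      ring
    have hφz : l * φ x + (1 - l) * φ y < φ z := by
      have : 0 < φ z - L z := hgz
      rw [hLz] at this; linarith
    have hrw : f x ^ l * f y ^ (1 - l) = Real.exp (l * φ x + (1 - l) * φ y) := by
      rw [Real.exp_add, Real.rpow_def_of_pos (hpos x), Real.rpow_def_of_pos (hpos y), hφ]
      ring_nf
    rw [hrw, show f z = Real.exp (φ z) from (Real.exp_log (hpos z)).symm]
    exact Real.exp_lt_exp.mpr hφz
  intro x y l hxy hl0 hl1
  rcases lt_or_gt_of_ne hxy with h | h
  · exact key x y l h hl0 hl1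
  · have hk := key y x (1 - l) h (by linarith) (by linarith)
    rw [show (1 - l) * y + (1 - (1 - l)) * x = l * x + (1 - l) * y by ring,
      show (1 - (1 - l)) = l by ring] at hk
    rw [mul_comm (f x ^ l)]
    exact hk

/-- Four-point inequality for the survival function of a density with the
four-point property. -/
lemma G_four_pt {μ₁ : ℝ → ℝ} (hcont : Continuous μ₁) (hpos : ∀ x, 0 < μ₁ x)
    (hint : Integrable μ₁)
    (h4 : ∀ a b c d : ℝ, a + b = c + d → a < c → a < d → μ₁ a * μ₁ b < μ₁ c * μ₁ d)
    {a b c d : ℝ} (hsum : a + b = c + d) (hac : a < c) (had : a < d) :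
    (∫ s in Ioi a, μ₁ s) * (∫ s in Ioi b, μ₁ s)
      < (∫ s in Ioi c, μ₁ s) * (∫ s in Ioi d, μ₁ s) := by
  set x₁ : ℝ := 0 with hx₁
  set x₂ : ℝ := d - a with hx₂
  set y₁ : ℝ := -c with hy₁
  set y₂ : ℝ := -a with hy₂
  set φ₁ : ℝ → ℝ := (Ioi x₁).indicator (fun _ => (1:ℝ)) with hφ₁
  set φ₂ : ℝ → ℝ := (Ioi x₂).indicator (fun _ => (1:ℝ)) with hφ₂
  set ψ₁ : ℝ → ℝ := fun s => μ₁ (s - y₁) with hψ₁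
  set ψ₂ : ℝ → ℝ := fun s => μ₁ (s - y₂) with hψ₂
  have hIval : ∀ x s : ℝ, (Ioi x).indicator (fun _ => (1:ℝ)) s = if x < s then 1 else 0 := by
    intro x s
    by_cases h : x < s
    · rw [indicator_of_mem (by simpa using h)]; simp [h]
    · rw [indicator_of_notMem (by simpa using h)]; simp [h]
  -- the four products and their integrals
  have hprod : ∀ (x y : ℝ), (fun s => (Ioi x).indicator (fun _ => (1:ℝ)) s * μ₁ (s - y))
      = (Ioi x).indicator (fun s => μ₁ (s - y)) := by
    intro x y
    funext s
    by_cases h : s ∈ Ioi x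
    · rw [indicator_of_mem h, indicator_of_mem h]; simp
    · rw [indicator_of_notMem h, indicator_of_notMem h]; simp
  have hintP : ∀ (x y : ℝ), Integrable (fun s => (Ioi x).indicator (fun _ => (1:ℝ)) s * μ₁ (s - y)) := by
    intro x y
    rw [hprod x y]
    exact (hint.comp_sub_right y).indicator measurableSet_Ioi
  have hIeq : ∀ (x y : ℝ), (∫ s, (Ioi x).indicator (fun _ => (1:ℝ)) s * μ₁ (s - y))
      = ∫ s in Ioi (x - y), μ₁ s := by
    intro x y
    rw [hprod x y, integral_indicator measurableSet_Ioi, survival_shift μ₁ x y]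
  -- B positivity
  have hB : ∀ s t : ℝ, s < t → 0 < ψ₁ s * ψ₂ t - ψ₁ t * ψ₂ s := by
    intro s t hst
    have hy : y₁ < y₂ := by rw [hy₁, hy₂]; linarith
    have := h4 (s - y₂) (t - y₁) (s - y₁) (t - y₂) (by ring) (by linarith) (by linarith)
    simp only [hψ₁, hψ₂]
    linarith
  have hA : ∀ s t : ℝ, s < t → (φ₁ s * φ₂ t - φ₁ t * φ₂ s = 0
      ∨ φ₁ s * φ₂ t - φ₁ t * φ₂ s = 1) := by
    intro s t hst
    have hx : x₁ < x₂ := by rw [hx₁, hx₂]; linarith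
    simp only [hφ₁, hφ₂, hIval]
    by_cases h1 : x₁ < s
    · by_cases h2 : x₂ < s
      · simp [h1, h2, show x₁ < t by linarith, show x₂ < t by linarith]
      · by_cases h3 : x₂ < t
        · simp [h1, h2, h3, show x₁ < t by linarith]
        · simp [h1, h2, h3]
    · have h2 : ¬ x₂ < s := by rw [hx₂]; rw [hx₁] at h1; linarith
      simp [h1, h2]
  have key : ∀ s t : ℝ, s < t →
      0 ≤ (φ₁ s * φ₂ t - φ₁ t * φ₂ s) * (ψ₁ s * ψ₂ t - ψ₁ t * ψ₂ s) := by
    intro s t hst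
    rcases hA s t hst with h | h
    · rw [h, zero_mul]
    · rw [h, one_mul]; exact (hB s t hst).le
  have hAB : ∀ s t : ℝ, 0 ≤ (φ₁ s * φ₂ t - φ₁ t * φ₂ s) * (ψ₁ s * ψ₂ t - ψ₁ t * ψ₂ s) := by
    intro s t
    rcases lt_trichotomy s t with h | h | h
    · exact key s t h
    · subst h; simp [sub_self]
    · have h' := key t s h
      have e : (φ₁ s * φ₂ t - φ₁ t * φ₂ s) * (ψ₁ s * ψ₂ t - ψ₁ t * ψ₂ s)
          = (φ₁ t * φ₂ s - φ₁ s * φ₂ t) * (ψ₁ t * ψ₂ s - ψ₁ s * ψ₂ t) := by ring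
      rw [e]; exact h'
  have hUV : ∀ s ∈ Ioo x₁ x₂, ∀ t ∈ Ioi x₂,
      0 < (φ₁ s * φ₂ t - φ₁ t * φ₂ s) * (ψ₁ s * ψ₂ t - ψ₁ t * ψ₂ s) := by
    rintro s ⟨hs1, hs2⟩ t ht
    rw [mem_Ioi] at ht
    have hst : s < t := lt_trans hs2 ht
    have hAone : φ₁ s * φ₂ t - φ₁ t * φ₂ s = 1 := by
      have hx : x₁ < x₂ := by rw [hx₁, hx₂]; linarith
      simp only [hφ₁, hφ₂, hIval]
      simp [hs1, show ¬ x₂ < s from not_lt.mpr hs2.le, ht, show x₁ < t by linarith]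
    rw [hAone, one_mul]
    exact hB s t hst
  have hxne : (Ioo x₁ x₂).Nonempty := by
    rw [hx₁, hx₂]; exact ⟨(d - a)/2, by constructor <;> [linarith; linarith]⟩
  have hres := det_pos (hintP x₁ y₁) (hintP x₁ y₂) (hintP x₂ y₁) (hintP x₂ y₂) hAB
    isOpen_Ioo isOpen_Ioi hxne (nonempty_Ioi) hUV
  rw [hIeq x₁ y₁, hIeq x₁ y₂, hIeq x₂ y₁, hIeq x₂ y₂] at hres
  have e1 : x₁ - y₂ = a := by rw [hx₁, hy₂]; ring
  have e2 : x₂ - y₁ = b := by rw [hx₂, hy₁]; linarith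
  have e3 : x₁ - y₁ = c := by rw [hx₁, hy₁]; ring
  have e4 : x₂ - y₂ = d := by rw [hx₂, hy₂]; ring
  rw [e1, e2, e3, e4] at hres
  exact hres

/-- Four-point inequality for the "convolution" `θ ↦ ∫ x, G (x - θ) * μ₂ x`. -/
lemma P_four_pt {G μ₂ : ℝ → ℝ} (hGcont : Continuous G) (hGpos : ∀ t, 0 < G t)
    (hGle : ∀ t, G t ≤ 1)
    (hG4 : ∀ a b c d : ℝ, a + b = c + d → a < c → a < d → G a * G b < G c * G d)
    (hμ₂int : Integrable μ₂)
    (h₂4 : ∀ a b c d : ℝ, a + b = c + d → a < c → a < d → μ₂ a * μ₂ b < μ₂ c * μ₂ d)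
    {a b c d : ℝ} (hsum : a + b = c + d) (hac : a < c) (had : a < d) :
    (∫ x, G (x - a) * μ₂ x) * (∫ x, G (x - b) * μ₂ x)
      < (∫ x, G (x - c) * μ₂ x) * (∫ x, G (x - d) * μ₂ x) := by
  set u₁ : ℝ := 0 with hu₁
  set u₂ : ℝ := d - a with hu₂
  set v₁ : ℝ := c with hv₁
  set v₂ : ℝ := a with hv₂
  have hintP : ∀ (u v : ℝ), Integrable (fun s => G (s - u) * μ₂ (s + v)) := by
    intro u v
    refine (hμ₂int.comp_add_right v).bdd_mul
      ((hGcont.comp (continuous_id.sub continuous_const)).aestronglyMeasurable) (c := 1) (Filter.Eventually.of_forall fun s => ?_)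
    rw [Real.norm_eq_abs, abs_of_pos (hGpos _)]
    exact hGle _
  have hIeq : ∀ (u v : ℝ), (∫ s, G (s - u) * μ₂ (s + v)) = ∫ x, G (x - (u + v)) * μ₂ x := by
    intro u v
    have e : (fun s => G (s - u) * μ₂ (s + v))
        = fun s => (fun x => G (x - (u + v)) * μ₂ x) (s + v) := by
      funext s
      simp only []
      rw [show s + v - (u + v) = s - u by ring]
    rw [e]
    exact integral_add_right_eq_self (fun x => G (x - (u + v)) * μ₂ x) v
  have hA : ∀ s t : ℝ, s < t →
      0 < G (s - u₁) * G (t - u₂) - G (t - u₁) * G (s - u₂) := by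
    intro s t hst
    have hu : u₁ < u₂ := by rw [hu₁, hu₂]; linarith
    have := hG4 (s - u₂) (t - u₁) (s - u₁) (t - u₂) (by ring) (by linarith) (by linarith)
    linarith
  have hB : ∀ s t : ℝ, s < t →
      0 < μ₂ (s + v₁) * μ₂ (t + v₂) - μ₂ (t + v₁) * μ₂ (s + v₂) := by
    intro s t hst
    have hv : v₂ < v₁ := by rw [hv₁, hv₂]; linarith
    have := h₂4 (s + v₂) (t + v₁) (s + v₁) (t + v₂) (by ring) (by linarith) (by linarith)
    linarith
  have key : ∀ s t : ℝ, s < t →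
      0 < (G (s - u₁) * G (t - u₂) - G (t - u₁) * G (s - u₂))
        * (μ₂ (s + v₁) * μ₂ (t + v₂) - μ₂ (t + v₁) * μ₂ (s + v₂)) :=
    fun s t hst => mul_pos (hA s t hst) (hB s t hst)
  have hAB : ∀ s t : ℝ,
      0 ≤ (G (s - u₁) * G (t - u₂) - G (t - u₁) * G (s - u₂))
        * (μ₂ (s + v₁) * μ₂ (t + v₂) - μ₂ (t + v₁) * μ₂ (s + v₂)) := by
    intro s t
    rcases lt_trichotomy s t with h | h | h
    · exact (key s t h).le
    · subst h; simp [sub_self]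
    · have h' := key t s h
      have e : (G (s - u₁) * G (t - u₂) - G (t - u₁) * G (s - u₂))
          * (μ₂ (s + v₁) * μ₂ (t + v₂) - μ₂ (t + v₁) * μ₂ (s + v₂))
          = (G (t - u₁) * G (s - u₂) - G (s - u₁) * G (t - u₂))
          * (μ₂ (t + v₁) * μ₂ (s + v₂) - μ₂ (s + v₁) * μ₂ (t + v₂)) := by ring
      rw [e]; exact h'.le
  have hUV : ∀ s ∈ Iio (0:ℝ), ∀ t ∈ Ioi (0:ℝ),
      0 < (G (s - u₁) * G (t - u₂) - G (t - u₁) * G (s - u₂))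
        * (μ₂ (s + v₁) * μ₂ (t + v₂) - μ₂ (t + v₁) * μ₂ (s + v₂)) := by
    intro s hs t ht
    rw [mem_Iio] at hs; rw [mem_Ioi] at ht
    exact key s t (lt_trans hs ht)
  have hres := det_pos (φ₁ := fun s => G (s - u₁)) (φ₂ := fun s => G (s - u₂))
    (ψ₁ := fun s => μ₂ (s + v₁)) (ψ₂ := fun s => μ₂ (s + v₂))
    (hintP u₁ v₁) (hintP u₁ v₂) (hintP u₂ v₁) (hintP u₂ v₂) hAB
    isOpen_Iio isOpen_Ioi nonempty_Iio nonempty_Ioi hUV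
  rw [hIeq u₁ v₁, hIeq u₁ v₂, hIeq u₂ v₁, hIeq u₂ v₂] at hres
  have e1 : u₁ + v₂ = a := by rw [hu₁, hv₂]; ring
  have e2 : u₂ + v₁ = b := by rw [hu₂, hv₁]; linarith
  have e3 : u₁ + v₁ = c := by rw [hu₁, hv₁]; ring
  have e4 : u₂ + v₂ = d := by rw [hu₂, hv₂]; ring
  rw [e1, e2, e3, e4] at hres
  exact hres

theorem pairwise_probability_strictLogConcave
    (μ₁ μ₂ : ℝ → ℝ)
    (h₁_cont : Continuous μ₁) (h₂_cont : Continuous μ₂)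
    (h₁_pos : ∀ x, 0 < μ₁ x) (h₂_pos : ∀ x, 0 < μ₂ x)
    (h₁_int : ∫ x : ℝ, μ₁ x = 1) (h₂_int : ∫ x : ℝ, μ₂ x = 1)
    (h₁_slc : StrictLogConcave μ₁) (h₂_slc : StrictLogConcave μ₂)
    (P : ℝ → ℝ)
    (hP : ∀ θ₁ : ℝ, P θ₁ = ∫ x₂ : ℝ, (∫ x₁ in Set.Ioi x₂, μ₁ (x₁ - θ₁)) * μ₂ x₂) :
    StrictLogConcave P := by
  have hμ₁int : Integrable μ₁ := integrable_of_integral_one h₁_int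
  have hμ₂int : Integrable μ₂ := integrable_of_integral_one h₂_int
  have h₁4 : ∀ a b c d : ℝ, a + b = c + d → a < c → a < d → μ₁ a * μ₁ b < μ₁ c * μ₁ d :=
    fun a b c d hs h1 h2 => slc_four_pt h₁_pos h₁_slc hs h1 h2
  have h₂4 : ∀ a b c d : ℝ, a + b = c + d → a < c → a < d → μ₂ a * μ₂ b < μ₂ c * μ₂ d :=
    fun a b c d hs h1 h2 => slc_four_pt h₂_pos h₂_slc hs h1 h2
  -- the survival function of μ₁
  set G : ℝ → ℝ := fun t => ∫ s in Ioi t, μ₁ s with hG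
  have hGpos : ∀ t, 0 < G t := by
    intro t
    rw [hG]
    refine (integral_pos_iff_support_of_nonneg (fun x => (h₁_pos x).le) hμ₁int.restrict).mpr ?_
    have hsupp : Function.support μ₁ = univ := by
      ext x; simp [(h₁_pos x).ne']
    rw [hsupp, Measure.restrict_apply_univ]
    exact isOpen_Ioi.measure_pos volume nonempty_Ioi
  have hGle : ∀ t, G t ≤ 1 := by
    intro t
    rw [hG, ← h₁_int]
    exact setIntegral_le_integral hμ₁int (Filter.Eventually.of_forall fun x => (h₁_pos x).le)
  have hGiic : ∀ t, G t = 1 - ∫ s in Iic t, μ₁ s := by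
    intro t
    have h := integral_add_compl (measurableSet_Iic (a := t)) hμ₁int
    rw [compl_Iic] at h
    rw [hG]
    simp only []
    rw [h₁_int] at h
    linarith
  have hGcont : Continuous G := by
    have hc : Continuous fun t => ∫ s in (0:ℝ)..t, μ₁ s := hμ₁int.continuous_primitive 0
    have hGeq : G = fun t => (1 - ∫ s in Iic (0:ℝ), μ₁ s) - ∫ s in (0:ℝ)..t, μ₁ s := by
      funext t
      rw [hGiic t, ← intervalIntegral.integral_Iic_sub_Iic hμ₁int.integrableOn hμ₁int.integrableOn]
      ring
    rw [hGeq]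
    exact continuous_const.sub hc
  have hG4 : ∀ a b c d : ℝ, a + b = c + d → a < c → a < d → G a * G b < G c * G d := by
    intro a b c d hs h1 h2
    rw [hG]
    exact G_four_pt h₁_cont h₁_pos hμ₁int h₁4 hs h1 h2
  -- representation of P
  have hPrep : ∀ θ, P θ = ∫ x, G (x - θ) * μ₂ x := by
    intro θ
    rw [hP θ]
    refine congrArg (integral volume) (funext fun x => ?_)
    rw [survival_shift μ₁ x θ, hG]
  -- positivity and continuity of P
  have hPint : ∀ θ, Integrable (fun x => G (x - θ) * μ₂ x) := by
    intro θ
    refine hμ₂int.bdd_mul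
      ((hGcont.comp (continuous_id.sub continuous_const)).aestronglyMeasurable) (c := 1) (Filter.Eventually.of_forall fun s => ?_)
    rw [Real.norm_eq_abs, abs_of_pos (hGpos _)]
    exact hGle _
  have hPpos : ∀ θ, 0 < P θ := by
    intro θ
    rw [hPrep θ]
    refine (integral_pos_iff_support_of_nonneg
      (fun x => (mul_pos (hGpos _) (h₂_pos x)).le) (hPint θ)).mpr ?_
    have hsupp : Function.support (fun x => G (x - θ) * μ₂ x) = univ := by
      ext x
      simp only [Function.mem_support, mem_univ, iff_true]
      exact (mul_pos (hGpos (x - θ)) (h₂_pos x)).ne'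
    rw [hsupp]
    exact isOpen_univ.measure_pos volume univ_nonempty
  have hPcont : Continuous P := by
    have h : Continuous fun θ => ∫ x, G (x - θ) * μ₂ x := by
      refine continuous_of_dominated (fun θ => (hPint θ).aestronglyMeasurable)
        (fun θ => Filter.Eventually.of_forall fun x => ?_) hμ₂int
        (Filter.Eventually.of_forall fun x => ?_)
      · rw [Real.norm_eq_abs, abs_mul, abs_of_pos (hGpos _), abs_of_pos (h₂_pos x)]
        calc G (x - θ) * μ₂ x ≤ 1 * μ₂ x :=
          mul_le_mul_of_nonneg_right (hGle _) (h₂_pos x).le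
        _ = μ₂ x := one_mul _
      · exact (hGcont.comp (continuous_const.sub continuous_id)).mul continuous_const
    have hPeq : P = fun θ => ∫ x, G (x - θ) * μ₂ x := funext fun θ => hPrep θ
    rw [hPeq]
    exact h
  -- four-point property of P
  have hP4 : ∀ a b c d : ℝ, a + b = c + d → a < c → a < d → P a * P b < P c * P d := by
    intro a b c d hs h1 h2
    rw [hPrep a, hPrep b, hPrep c, hPrep d]
    exact P_four_pt hGcont hGpos hGle hG4 hμ₂int h₂4 hs h1 h2
  exact strictLogConcave_of_four_pt hPcont hPpos hP4
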